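/- For every acceptor A, the non-empty repetition A⁺ satisfies: w ∈ L(A⁺) if and only if there exist k ≥ 1 and words w₁,...,w_k ∈ L(A) with w = w₁⋯w_k. -/

import Mathlib

/-- A border function on a well-ordered alphabet, viewed as a finite set of ordered pairs
(a functional finite graph) that is defined at least for the minimal symbol `⊥`. -/
structure BorderFun (α : Type*) [LinearOrder α] [OrderBot α] (D : Type*) where
  graph : Finset (α × D)
  functional : ∀ p ∈ graph, ∀ q ∈ graph, p.1 = q.1 → p.2 = q.2
  bot_mem : ∃ d, (⊥, d) ∈ graph

namespace BorderFun
open Classical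

variable {α : Type*} [LinearOrder α] [OrderBot α] {D D' D₁ D₂ : Type*}

/-- The domain of a border function. -/
def dom (φ : BorderFun α D) : Finset α := φ.graph.image Prod.fst

lemma filter_nonempty (φ : BorderFun α D) (σ : α) :
    (φ.dom.filter (fun τ => τ ≤ σ)).Nonempty := by
  obtain ⟨d, hd⟩ := φ.bot_mem
  exact ⟨⊥, Finset.mem_filter.mpr ⟨Finset.mem_image.mpr ⟨(⊥, d), hd, rfl⟩, bot_le⟩⟩

/-- `σ^≤`: the greatest element of the domain that is `≤ σ`. -/
def maxLe (φ : BorderFun α D) (σ : α) : α :=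
  (φ.dom.filter (fun τ => τ ≤ σ)).max' (φ.filter_nonempty σ)

lemma exists_leVal (φ : BorderFun α D) (σ : α) : ∃ d, (φ.maxLe σ, d) ∈ φ.graph := by
  have h := Finset.max'_mem _ (φ.filter_nonempty σ)
  have h2 := (Finset.mem_filter.mp h).1
  obtain ⟨p, hp, hfst⟩ := Finset.mem_image.mp h2
  exact ⟨p.2, by rw [show φ.maxLe σ = p.1 from hfst.symm]; exact hp⟩

/-- `φ^≤(σ)`: the value of `φ` at the greatest domain element `≤ σ`. -/
noncomputable def leVal (φ : BorderFun α D) (σ : α) : D :=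
  Classical.choose (φ.exists_leVal σ)

/-- Two border functions are equivalent if they induce the same total function `φ^≤`. -/
def Equiv (φ ψ : BorderFun α D) : Prop := ∀ σ, φ.leVal σ = ψ.leVal σ

/-- The minimization of a border function: remove every border whose immediate
predecessor border carries the same value. -/
noncomputable def minimize (φ : BorderFun α D) : BorderFun α D where
  graph := φ.graph.filter (fun p => ∀ q ∈ φ.graph, q.1 < p.1 →
    (∀ r ∈ φ.graph, ¬(q.1 < r.1 ∧ r.1 < p.1)) → q.2 ≠ p.2)
  functional := fun p hp q hq =>
    φ.functional p (Finset.mem_of_mem_filter p hp) q (Finset.mem_of_mem_filter q hq)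
  bot_mem := by
    obtain ⟨d, hd⟩ := φ.bot_mem
    exact ⟨d, Finset.mem_filter.mpr ⟨hd, fun q hq hlt => absurd hlt (not_lt_bot)⟩⟩

/-- Pointwise application of a function to the values of a border function (without minimization). -/
noncomputable def map (f : D → D') (φ : BorderFun α D) : BorderFun α D' where
  graph := φ.graph.image (fun p => (p.1, f p.2))
  functional := by
    intro p hp q hq h
    obtain ⟨a, ha, rfl⟩ := Finset.mem_image.mp hp
    obtain ⟨b, hb, rfl⟩ := Finset.mem_image.mp hq
    simp only at h ⊢
    rw [φ.functional a ha b hb h]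
  bot_mem := by
    obtain ⟨d, hd⟩ := φ.bot_mem
    exact ⟨f d, Finset.mem_image.mpr ⟨(⊥, d), hd, rfl⟩⟩

/-- The application of `f` on `φ`: the minimization of the pointwise image. -/
noncomputable def appF (f : D → D') (φ : BorderFun α D) : BorderFun α D' :=
  (φ.map f).minimize

/-- The product of two border functions. -/
noncomputable def prod (φ₁ : BorderFun α D₁) (φ₂ : BorderFun α D₂) :
    BorderFun α (D₁ × D₂) where
  graph := (φ₁.dom ∪ φ₂.dom).image (fun σ => (σ, (φ₁.leVal σ, φ₂.leVal σ)))
  functional := by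
    intro p hp q hq h
    obtain ⟨a, ha, rfl⟩ := Finset.mem_image.mp hp
    obtain ⟨b, hb, rfl⟩ := Finset.mem_image.mp hq
    simp only at h ⊢
    subst h
    rfl
  bot_mem := by
    obtain ⟨d, hd⟩ := φ₁.bot_mem
    exact ⟨_, Finset.mem_image.mpr ⟨⊥,
      Finset.mem_union_left _ (Finset.mem_image.mpr ⟨(⊥, d), hd, rfl⟩), rfl⟩⟩

/-- The constant border function with the single border `(⊥, d)`. -/
def botFun (d : D) : BorderFun α D :=
  ⟨{(⊥, d)}, by
    intro p hp q hq _
    simp only [Finset.mem_singleton] at hp hq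
    rw [hp, hq], ⟨d, by simp⟩⟩

end BorderFun

/-- An acceptor: a flat list of states, each consisting of a set of relative
ε-transitions and a border function giving relative symbol transitions
(`none` = `#`, no transition). State `i` (1-indexed) is `states[i-1]`;
the initial state is `1` and the accepting state is `length + 1`. -/
abbrev Acceptor (α : Type*) [LinearOrder α] [OrderBot α] :=
  List (Finset ℤ × BorderFun α (Option ℤ))

namespace Acceptor

variable {α : Type*} [LinearOrder α] [OrderBot α]

/-- The committing condition: no transitions to states `< 2` or `> n + 1`. -/
def Valid (M : Acceptor α) : Prop :=
  ∀ i (hi : i < M.length),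
    (∀ j ∈ (M.get ⟨i, hi⟩).1,
        2 ≤ (i + 1 : ℤ) + j ∧ (i + 1 : ℤ) + j ≤ (M.length : ℤ) + 1) ∧
    (∀ p ∈ (M.get ⟨i, hi⟩).2.graph, ∀ j : ℤ, p.2 = some j →
        2 ≤ (i + 1 : ℤ) + j ∧ (i + 1 : ℤ) + j ≤ (M.length : ℤ) + 1)

/-- The transition relation on configurations `(state, word read so far)`. -/
inductive Step (M : Acceptor α) : ℤ × List α → ℤ × List α → Prop
  | eps {i : ℕ} (hi : i < M.length) {j : ℤ} (hj : j ∈ (M.get ⟨i, hi⟩).1) (w : List α) :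
      Step M ((i : ℤ) + 1, w) ((i : ℤ) + 1 + j, w)
  | symb {i : ℕ} (hi : i < M.length) {σ : α} {j : ℤ}
      (hj : (M.get ⟨i, hi⟩).2.leVal σ = some j) (w : List α) :
      Step M ((i : ℤ) + 1, w) ((i : ℤ) + 1 + j, w ++ [σ])

/-- `M` accepts `w` iff `(1, ε) ⊢* (‖M‖ + 1, w)`. -/
def Accepts (M : Acceptor α) (w : List α) : Prop :=
  Relation.ReflTransGen (Step M) (1, []) ((M.length : ℤ) + 1, w)

/-- The language of an acceptor. -/
def Lang (M : Acceptor α) : Set (List α) := {w | M.Accepts w}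

/-- The acceptor `A_ε`, which is the empty sequence. -/
def epsA : Acceptor α := []

/-- The one-state acceptor `A_∅` accepting nothing. -/
def emptyA : Acceptor α := [(∅, BorderFun.botFun none)]

/-- `M{i →^ε j}`: add the relative ε-transition `j - i` to state `i`. -/
def addEps (M : Acceptor α) (i j : ℤ) : Acceptor α :=
  M.modify (i - 1).toNat (fun p => (insert (j - i) p.1, p.2))

/-- The union `M₁ | M₂ := (M₁ ∘ A_∅ ∘ M₂){1 →^ε ‖M₁‖+2, ‖M₁‖+1 →^ε ‖M₁‖+‖M₂‖+2}`. -/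
def union (M₁ M₂ : Acceptor α) : Acceptor α :=
  addEps (addEps (M₁ ++ emptyA ++ M₂) 1 ((M₁.length : ℤ) + 2))
    ((M₁.length : ℤ) + 1) ((M₁.length : ℤ) + (M₂.length : ℤ) + 2)

/-- The Kleene star
`M* := (A_∅ ∘ M ∘ A_∅){1 →^ε 2, 2 →^ε ‖M‖+3, ‖M‖+2 →^ε 2}`. -/
def star (M : Acceptor α) : Acceptor α :=
  addEps (addEps (addEps (emptyA ++ M ++ emptyA) 1 2) 2 ((M.length : ℤ) + 3))
    ((M.length : ℤ) + 2) 2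

/-- The non-empty repetition
`M⁺ := (A_∅ ∘ M ∘ A_∅){1 →^ε 2, ‖M‖+2 →^ε 2, ‖M‖+2 →^ε ‖M‖+3}`. -/
def plus (M : Acceptor α) : Acceptor α :=
  addEps (addEps (addEps (emptyA ++ M ++ emptyA) 1 2) ((M.length : ℤ) + 2) 2)
    ((M.length : ℤ) + 2) ((M.length : ℤ) + 3)

/-- The optional acceptor `M? := M{1 →^ε ‖M‖+1}`. -/
def opt (M : Acceptor α) : Acceptor α := addEps M 1 ((M.length : ℤ) + 1)

end Acceptor

section Aux
open Acceptor Relation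

variable {α : Type*} [LinearOrder α] [OrderBot α] {D : Type*}

lemma BorderFun.leVal_mem (φ : BorderFun α D) (σ : α) :
    (φ.maxLe σ, φ.leVal σ) ∈ φ.graph :=
  Classical.choose_spec (φ.exists_leVal σ)

lemma botFun_leVal (d : D) (σ : α) : (BorderFun.botFun (α := α) d).leVal σ = d := by
  have h := BorderFun.leVal_mem (BorderFun.botFun (α := α) d) σ
  simp only [BorderFun.botFun, Finset.mem_singleton, Prod.mk.injEq] at h
  exact h.2

lemma plus_length (M : Acceptor α) : (Acceptor.plus M).length = M.length + 2 := by
  simp [Acceptor.plus, Acceptor.addEps, Acceptor.emptyA]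

lemma base_getElem_zero (M : Acceptor α) :
    ((Acceptor.emptyA ++ M ++ Acceptor.emptyA : Acceptor α))[0]'(by simp [Acceptor.emptyA]) =
      ((∅ : Finset ℤ), BorderFun.botFun (α := α) none) := by
  rw [List.getElem_append_left (by simp [Acceptor.emptyA] <;> omega)]
  rfl

lemma base_getElem_last (M : Acceptor α) :
    ((Acceptor.emptyA ++ M ++ Acceptor.emptyA : Acceptor α))[M.length + 1]'(by
        simp [Acceptor.emptyA]) =
      ((∅ : Finset ℤ), BorderFun.botFun (α := α) none) := by
  rw [List.getElem_append_right (by simp [Acceptor.emptyA] <;> omega)]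
  simp [Acceptor.emptyA]

lemma plus_unfold (M : Acceptor α) :
    Acceptor.plus M =
      List.modify
        (List.modify
          (List.modify
            (Acceptor.emptyA ++ M ++ Acceptor.emptyA) 0 (fun p => (insert (2 - 1) p.1, p.2)))
          (M.length + 1) (fun p => (insert (2 - ((M.length:ℤ) + 2)) p.1, p.2)))
        (M.length + 1) (fun p => (insert ((M.length:ℤ) + 3 - ((M.length:ℤ) + 2)) p.1, p.2)) := by
  have hL1 : ((M.length:ℤ) + 2 - 1).toNat = M.length + 1 := by omega
  simp only [Acceptor.plus, Acceptor.addEps, hL1, show ((1:ℤ)-1).toNat = 0 from rfl]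

lemma plus_getElem_zero (M : Acceptor α) :
    (Acceptor.plus M)[0]'(by rw [plus_length]; omega) =
      (({1} : Finset ℤ), BorderFun.botFun (α := α) none) := by
  rw [List.getElem_of_eq (plus_unfold M) _, List.getElem_modify, List.getElem_modify, List.getElem_modify,
    if_neg (by omega), if_neg (by omega), if_pos rfl, base_getElem_zero]
  norm_num

lemma plus_getElem_last (M : Acceptor α) :
    (Acceptor.plus M)[M.length + 1]'(by rw [plus_length]; omega) =
      (({1, -(M.length:ℤ)} : Finset ℤ), BorderFun.botFun (α := α) none) := by
  rw [List.getElem_of_eq (plus_unfold M) _, List.getElem_modify, List.getElem_modify, List.getElem_modify,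
    if_pos rfl, if_pos rfl, if_neg (by omega), base_getElem_last]
  simp only [Prod.mk.injEq]
  refine ⟨?_, trivial⟩
  norm_num

lemma plus_getElem_mid (M : Acceptor α) (k : ℕ) (h0 : 1 ≤ k) (h1 : k ≤ M.length) :
    (Acceptor.plus M)[k]'(by rw [plus_length]; omega) = M[k-1]'(by omega) := by
  rw [List.getElem_of_eq (plus_unfold M) _, List.getElem_modify, List.getElem_modify, List.getElem_modify,
    if_neg (by omega), if_neg (by omega), if_neg (by omega),
    List.getElem_append_left (by simp [Acceptor.emptyA] <;> omega),
    List.getElem_append_right (by simp [Acceptor.emptyA] <;> omega)]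
  congr 1

end Aux
section Aux2
open Acceptor Relation

variable {α : Type*} [LinearOrder α] [OrderBot α]

lemma step_cast {N : Acceptor α} {c d c' d' : ℤ × List α} (h : Acceptor.Step N c d)
    (hc : c = c') (hd : d = d') : Acceptor.Step N c' d' := hc ▸ hd ▸ h

lemma step_mono (N : Acceptor α) (v : List α) {c d : ℤ × List α} (h : Acceptor.Step N c d) :
    Acceptor.Step N (c.1, v ++ c.2) (d.1, v ++ d.2) := by
  cases h with
  | eps hi hj w => exact Acceptor.Step.eps hi hj (v ++ w)
  | symb hi hj w =>
      exact step_cast (Acceptor.Step.symb hi hj (v ++ w)) rfl (by simp)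

lemma run_mono (N : Acceptor α) (v : List α) {c d : ℤ × List α}
    (h : Relation.ReflTransGen (Acceptor.Step N) c d) :
    Relation.ReflTransGen (Acceptor.Step N) (c.1, v ++ c.2) (d.1, v ++ d.2) := by
  induction h with
  | refl => exact Relation.ReflTransGen.refl
  | tail _ hstep ih => exact ih.tail (step_mono N v hstep)

lemma step_embed {M : Acceptor α} {c d : ℤ × List α} (h : Acceptor.Step M c d) :
    Acceptor.Step (Acceptor.plus M) (c.1 + 1, c.2) (d.1 + 1, d.2) := by
  cases h with
  | @eps i hi j hj w =>
      have hi' : i + 1 < (Acceptor.plus M).length := by rw [plus_length]; omega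
      have hget : (Acceptor.plus M).get ⟨i + 1, hi'⟩ = M.get ⟨i, hi⟩ := by
        simp only [List.get_eq_getElem]
        rw [plus_getElem_mid M (i+1) (by omega) (by omega)]
        simp
      refine step_cast (Acceptor.Step.eps (M := Acceptor.plus M) hi'
        (j := j) (by rw [hget]; exact hj) w) ?_ ?_
      · simp only [Prod.mk.injEq]; constructor; · push_cast; ring
        trivial
      · simp only [Prod.mk.injEq]; constructor; · push_cast; ring
        trivial
  | @symb i hi σ j hj w =>
      have hi' : i + 1 < (Acceptor.plus M).length := by rw [plus_length]; omega
      have hget : (Acceptor.plus M).get ⟨i + 1, hi'⟩ = M.get ⟨i, hi⟩ := by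
        simp only [List.get_eq_getElem]
        rw [plus_getElem_mid M (i+1) (by omega) (by omega)]
        simp
      refine step_cast (Acceptor.Step.symb (M := Acceptor.plus M) hi'
        (σ := σ) (j := j) (by rw [hget]; exact hj) w) ?_ ?_
      · simp only [Prod.mk.injEq]; constructor; · push_cast; ring
        trivial
      · simp only [Prod.mk.injEq]; constructor; · push_cast; ring
        trivial

lemma run_embed {M : Acceptor α} {c d : ℤ × List α}
    (h : Relation.ReflTransGen (Acceptor.Step M) c d) :
    Relation.ReflTransGen (Acceptor.Step (Acceptor.plus M)) (c.1 + 1, c.2) (d.1 + 1, d.2) := by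
  induction h with
  | refl => exact Relation.ReflTransGen.refl
  | tail _ hstep ih => exact ih.tail (step_embed hstep)

/-- step from state 1 to state 2 -/
lemma step_one (M : Acceptor α) (w : List α) :
    Acceptor.Step (Acceptor.plus M) (1, w) (2, w) := by
  have hi : 0 < (Acceptor.plus M).length := by rw [plus_length]; omega
  have hj : (1 : ℤ) ∈ ((Acceptor.plus M).get ⟨0, hi⟩).1 := by
    simp only [List.get_eq_getElem]
    rw [plus_getElem_zero M]
    simp
  exact step_cast (Acceptor.Step.eps hi hj w) (by norm_num) (by norm_num)

lemma step_loop (M : Acceptor α) (w : List α) :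
    Acceptor.Step (Acceptor.plus M) ((M.length : ℤ) + 2, w) (2, w) := by
  have hi : M.length + 1 < (Acceptor.plus M).length := by rw [plus_length]; omega
  have hj : (-(M.length : ℤ)) ∈ ((Acceptor.plus M).get ⟨M.length + 1, hi⟩).1 := by
    simp only [List.get_eq_getElem]
    rw [plus_getElem_last M]
    simp
  refine step_cast (Acceptor.Step.eps hi hj w) ?_ ?_
  · simp only [Prod.mk.injEq]; constructor; · push_cast; ring
    trivial
  · simp only [Prod.mk.injEq]; constructor; · push_cast; ring
    trivial

lemma step_accept (M : Acceptor α) (w : List α) :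
    Acceptor.Step (Acceptor.plus M) ((M.length : ℤ) + 2, w) ((M.length : ℤ) + 3, w) := by
  have hi : M.length + 1 < (Acceptor.plus M).length := by rw [plus_length]; omega
  have hj : (1 : ℤ) ∈ ((Acceptor.plus M).get ⟨M.length + 1, hi⟩).1 := by
    simp only [List.get_eq_getElem]
    rw [plus_getElem_last M]
    simp
  refine step_cast (Acceptor.Step.eps hi hj w) ?_ ?_
  · simp only [Prod.mk.injEq]; constructor; · push_cast; ring
    trivial
  · simp only [Prod.mk.injEq]; constructor; · push_cast; ring
    trivial

lemma run_cycle (M : Acceptor α) {u : List α} (hu : u ∈ Acceptor.Lang M) (v : List α) :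
    Relation.ReflTransGen (Acceptor.Step (Acceptor.plus M)) (2, v)
      ((M.length : ℤ) + 2, v ++ u) := by
  have h1 := run_mono M v hu
  have h2 := run_embed (M := M) h1
  simp only [List.append_nil] at h2
  have : ((1 : ℤ) + 1, v) = ((2 : ℤ), v) := by norm_num
  rw [this] at h2
  have : ((M.length : ℤ) + 1 + 1, v ++ u) = ((M.length : ℤ) + 2, v ++ u) := by ring_nf
  rw [this] at h2
  exact h2

lemma runs_concat (M : Acceptor α) :
    ∀ ws : List (List α), ws ≠ [] → (∀ u ∈ ws, u ∈ Acceptor.Lang M) → ∀ v : List α,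
      Relation.ReflTransGen (Acceptor.Step (Acceptor.plus M)) (2, v)
        ((M.length : ℤ) + 3, v ++ ws.flatten) := by
  intro ws
  induction ws with
  | nil => intro h; exact absurd rfl h
  | cons u rest ih =>
      intro _ hall v
      have hu : u ∈ Acceptor.Lang M := hall u (by simp)
      rcases eq_or_ne rest [] with rfl | hne
      · have := (run_cycle M hu v).tail (step_accept M (v ++ u))
        simpa using this
      · have h1 := (run_cycle M hu v).tail (step_loop M (v ++ u))
        have h2 := ih hne (fun x hx => hall x (by simp [hx])) (v ++ u)
        have := h1.trans h2
        simpa [List.append_assoc] using this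
lemma plus_invariant (M : Acceptor α) (hV : Acceptor.Valid M) :
    ∀ c : ℤ × List α,
      Relation.ReflTransGen (Acceptor.Step (Acceptor.plus M)) (1, ([] : List α)) c →
      (c.1 = 1 ∧ c.2 = []) ∨
      (∃ ws : List (List α), (∀ u ∈ ws, u ∈ Acceptor.Lang M) ∧
        ∃ t u, c.1 = t + 1 ∧ 1 ≤ t ∧ t ≤ (M.length : ℤ) + 1 ∧ c.2 = ws.flatten ++ u ∧
          Relation.ReflTransGen (Acceptor.Step M) (1, []) (t, u)) ∨
      (∃ ws : List (List α), ws ≠ [] ∧ (∀ u ∈ ws, u ∈ Acceptor.Lang M) ∧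
        c.1 = (M.length : ℤ) + 3 ∧ c.2 = ws.flatten) := by
  intro c hc
  induction hc with
  | refl => exact Or.inl ⟨rfl, rfl⟩
  | tail hab hstep ih =>
    cases hstep with
    | @eps i hi j hj wb =>
      simp only at ih ⊢
      have hiL : i < M.length + 2 := by rw [plus_length] at hi; omega
      rcases Nat.eq_zero_or_pos i with rfl | hpos
      · -- state 1
        have hj' : j = 1 := by
          rw [List.get_eq_getElem, plus_getElem_zero M] at hj
          simpa using hj
        subst hj'
        rcases ih with ⟨h1, h2⟩ | ⟨ws, hws, t, u, ht, ht1, ht2, hw, hrun⟩ |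
          ⟨ws, hne, hws, hs, hw⟩
        · subst h2
          right; left
          exact ⟨[], by simp, 1, [], by norm_num, le_refl _, by omega, by simp,
            Relation.ReflTransGen.refl⟩
        · exfalso; omega
        · exfalso; omega
      · by_cases hlast : i = M.length + 1
        · -- state L+2
          subst hlast
          have hj' : j = 1 ∨ j = -(M.length : ℤ) := by
            rw [List.get_eq_getElem, plus_getElem_last M] at hj
            simpa using hj
          rcases ih with ⟨h1, h2⟩ | ⟨ws, hws, t, u, ht, ht1, ht2, hw, hrun⟩ |
            ⟨ws, hne, hws, hs, hw⟩
          · exfalso; omega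
          · have htt : t = (M.length : ℤ) + 1 := by push_cast at ht; omega
            have hu : u ∈ Acceptor.Lang M := by
              show Relation.ReflTransGen _ _ _
              rw [← htt]; exact hrun
            have hwsall : ∀ x ∈ ws ++ [u], x ∈ Acceptor.Lang M := by
              intro x hx
              rcases List.mem_append.mp hx with hx | hx
              · exact hws x hx
              · rw [List.mem_singleton] at hx; subst hx; exact hu
            rcases hj' with rfl | rfl
            · right; right
              exact ⟨ws ++ [u], by simp, hwsall, by push_cast; ring,
                by simp [hw, List.flatten_append]⟩
            · right; left
              refine ⟨ws ++ [u], hwsall, 1, [], by push_cast; ring, le_refl _, by omega,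
                by simp [hw, List.flatten_append], Relation.ReflTransGen.refl⟩
          · exfalso; push_cast at hs; omega
        · -- middle state: 1 ≤ i ≤ L
          have hiM : i ≤ M.length := by omega
          have hget : (Acceptor.plus M).get ⟨i, hi⟩ = M.get ⟨i - 1, by omega⟩ := by
            simp only [List.get_eq_getElem]
            rw [plus_getElem_mid M i hpos hiM]
          rw [hget] at hj
          rcases ih with ⟨h1, h2⟩ | ⟨ws, hws, t, u, ht, ht1, ht2, hw, hrun⟩ |
            ⟨ws, hne, hws, hs, hw⟩
          · exfalso; omega
          · have htt : t = (i : ℤ) := by omega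
            have hstepM : Acceptor.Step M (t, u) (t + j, u) := by
              refine step_cast (Acceptor.Step.eps (M := M) (i := i - 1) (by omega) hj u)
                ?_ ?_
              · rw [show ((i - 1 : ℕ) : ℤ) + 1 = t from by omega]
              · rw [show ((i - 1 : ℕ) : ℤ) + 1 + j = t + j from by omega]
            have hbound := (hV (i - 1) (by omega)).1 j hj
            right; left
            exact ⟨ws, hws, t + j, u, by omega, by omega, by omega, hw, hrun.tail hstepM⟩
          · exfalso; omega
    | @symb i hi σ j hj wb =>
      simp only at ih ⊢
      have hiL : i < M.length + 2 := by rw [plus_length] at hi; omega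
      rcases Nat.eq_zero_or_pos i with rfl | hpos
      · exfalso
        rw [List.get_eq_getElem, plus_getElem_zero M] at hj
        rw [show ((({1} : Finset ℤ), BorderFun.botFun (α := α) (none : Option ℤ))).2
          = BorderFun.botFun none from rfl, botFun_leVal] at hj
        simp at hj
      · by_cases hlast : i = M.length + 1
        · exfalso
          subst hlast
          rw [List.get_eq_getElem, plus_getElem_last M] at hj
          rw [show ((({1, -(M.length:ℤ)} : Finset ℤ),
            BorderFun.botFun (α := α) (none : Option ℤ))).2
            = BorderFun.botFun none from rfl, botFun_leVal] at hj
          simp at hj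
        · have hiM : i ≤ M.length := by omega
          have hget : (Acceptor.plus M).get ⟨i, hi⟩ = M.get ⟨i - 1, by omega⟩ := by
            simp only [List.get_eq_getElem]
            rw [plus_getElem_mid M i hpos hiM]
          rw [hget] at hj
          rcases ih with ⟨h1, h2⟩ | ⟨ws, hws, t, u, ht, ht1, ht2, hw, hrun⟩ |
            ⟨ws, hne, hws, hs, hw⟩
          · exfalso; omega
          · have htt : t = (i : ℤ) := by omega
            have hstepM : Acceptor.Step M (t, u) (t + j, u ++ [σ]) := by
              refine step_cast (Acceptor.Step.symb (M := M) (i := i - 1) (by omega) hj u)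
                ?_ ?_
              · rw [show ((i - 1 : ℕ) : ℤ) + 1 = t from by omega]
              · rw [show ((i - 1 : ℕ) : ℤ) + 1 + j = t + j from by omega]
            have hbound := (hV (i - 1) (by omega)).2 _
              (BorderFun.leVal_mem (M.get ⟨i - 1, by omega⟩).2 σ) j hj
            right; left
            refine ⟨ws, hws, t + j, u ++ [σ], by omega, by omega, by omega, ?_,
              hrun.tail hstepM⟩
            rw [hw, List.append_assoc]
          · exfalso; omega
end Aux2

/-- `w ∈ L(A⁺)` iff `w` is a concatenation `w₁⋯w_k` with `k ≥ 1`
and all `wᵢ ∈ L(A)`. -/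
theorem plus_lang {α : Type*} [LinearOrder α] [OrderBot α]
    (M : Acceptor α) (h : Acceptor.Valid M) (w : List α) :
    w ∈ Acceptor.Lang (Acceptor.plus M) ↔
      ∃ ws : List (List α), ws ≠ [] ∧ (∀ u ∈ ws, u ∈ Acceptor.Lang M) ∧
        w = ws.flatten := by
  have hlen : (((Acceptor.plus M).length : ℤ) + 1) = (M.length : ℤ) + 3 := by
    rw [plus_length]; push_cast; ring
  constructor
  · intro hw
    have hx : Relation.ReflTransGen (Acceptor.Step (Acceptor.plus M)) (1, [])
        ((M.length : ℤ) + 3, w) := by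
      rw [← hlen]; exact hw
    rcases plus_invariant M h _ hx with ⟨h1, _⟩ |
      ⟨ws, hws, t, u, ht, ht1, ht2, hw2, _⟩ | ⟨ws, hne, hws, _, hw2⟩
    · exfalso; simp only at h1; omega
    · exfalso; simp only at ht; omega
    · exact ⟨ws, hne, hws, hw2⟩
  · rintro ⟨ws, hne, hws, rfl⟩
    have h1 := runs_concat M ws hne hws []
    have h2 := Relation.ReflTransGen.head (step_one M []) h1
    show Relation.ReflTransGen _ _ _
    rw [hlen]
    simpa using h2
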